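/- Let p be a prime, μ ∈ ZMod p with μ ≠ 0, and R = (ZMod p)[X]/(X^p − X). Let ∂ : R → R be the (ZMod p)-linear map induced by f ↦ μ⁻¹ · (f.comp (X + C μ) − f) (well-defined since X^p − X is invariant under X ↦ X+μ). Then the kernel of ∂ is the one-dimensional subspace spanned by 1, and the class of X^{p−1} does not lie in the range of ∂ (so the range of ∂ has dimension p−1 and R = range ∂ ⊕ span{X^{p−1}}). -/

import Mathlib

open Polynomial

lemma keyfac (p : ℕ) [Fact p.Prime] :
    ((Finset.univ.val : Multiset (ZMod p)).map fun a => X - C a).prod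
      = (X : (ZMod p)[X]) ^ p - X := by
  have hp : 1 < p := (Fact.out : p.Prime).one_lt
  have hmonic : ((X : (ZMod p)[X]) ^ p - X).Monic := by
    apply (monic_X_pow p).sub_of_left
    rw [degree_X_pow, degree_X]
    exact_mod_cast hp
  have hroots : ((X : (ZMod p)[X]) ^ p - X).roots = Finset.univ.val := by
    have := FiniteField.roots_X_pow_card_sub_X (ZMod p)
    rwa [ZMod.card] at this
  have hcard : Multiset.card ((X : (ZMod p)[X]) ^ p - X).roots
      = ((X : (ZMod p)[X]) ^ p - X).natDegree := by
    rw [hroots, FiniteField.X_pow_card_sub_X_natDegree_eq _ hp]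
    simp [ZMod.card]
  have := Polynomial.C_leadingCoeff_mul_prod_multiset_X_sub_C hcard
  rw [hmonic.leadingCoeff, map_one, one_mul, hroots] at this
  exact this

lemma memI (p : ℕ) [Fact p.Prime] (f : (ZMod p)[X]) :
    f ∈ Ideal.span {(X : (ZMod p)[X]) ^ p - X} ↔ ∀ a : ZMod p, f.eval a = 0 := by
  rw [Ideal.mem_span_singleton]
  constructor
  · rintro ⟨g, rfl⟩ a
    simp [ZMod.pow_card]
  · intro h
    rcases eq_or_ne f 0 with rfl | hf0
    · exact dvd_zero _
    rw [← keyfac p]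
    rw [Multiset.prod_X_sub_C_dvd_iff_le_roots hf0]
    rw [Multiset.le_iff_count]
    intro a
    have h1 : Multiset.count a (Finset.univ.val : Multiset (ZMod p)) = 1 :=
      Multiset.count_eq_one_of_mem Finset.univ.nodup (Finset.mem_univ a)
    rw [h1, Multiset.one_le_count_iff_mem, mem_roots hf0]
    exact h a

theorem stmt17 (p : ℕ) [Fact p.Prime] (μ : ZMod p) (hμ : μ ≠ 0)
    (D : (Polynomial (ZMod p) ⧸ Ideal.span {(X : Polynomial (ZMod p)) ^ p - X}) →ₗ[ZMod p]
         (Polynomial (ZMod p) ⧸ Ideal.span {(X : Polynomial (ZMod p)) ^ p - X}))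
    (hD : ∀ f : Polynomial (ZMod p),
      D (Ideal.Quotient.mk (Ideal.span {(X : Polynomial (ZMod p)) ^ p - X}) f) =
        Ideal.Quotient.mk (Ideal.span {(X : Polynomial (ZMod p)) ^ p - X})
          (C μ⁻¹ * (f.comp (X + C μ) - f))) :
    LinearMap.ker D =
      Submodule.span (ZMod p)
        {(1 : Polynomial (ZMod p) ⧸ Ideal.span {(X : Polynomial (ZMod p)) ^ p - X})} ∧
    Ideal.Quotient.mk (Ideal.span {(X : Polynomial (ZMod p)) ^ p - X}) (X ^ (p - 1)) ∉
      LinearMap.range D := by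
  have hp : 1 < p := (Fact.out : p.Prime).one_lt
  have hsmul : ∀ (c : ZMod p) (g : Polynomial (ZMod p)),
      c • Ideal.Quotient.mk (Ideal.span {(X : Polynomial (ZMod p)) ^ p - X}) g = Ideal.Quotient.mk (Ideal.span {(X : Polynomial (ZMod p)) ^ p - X}) (C c * g) := by
    intro c g
    rw [← smul_eq_C_mul]
    rfl
  constructor
  · apply le_antisymm
    · intro y hy
      obtain ⟨f, rfl⟩ := Ideal.Quotient.mk_surjective y
      rw [LinearMap.mem_ker, hD, Ideal.Quotient.eq_zero_iff_mem, memI] at hy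
      have heq : ∀ a : ZMod p, f.eval (a + μ) = f.eval a := by
        intro a
        have := hy a
        simp only [eval_mul, eval_C, eval_sub, eval_comp, eval_add, eval_X] at this
        have h2 : f.eval (a + μ) - f.eval a = 0 := by
          field_simp at this
          rwa [mul_zero] at this
        exact sub_eq_zero.mp h2
      have hconst : ∀ a : ZMod p, f.eval a = f.eval 0 := by
        have key : ∀ n : ℕ, f.eval (n • μ) = f.eval 0 := by
          intro n
          induction n with
          | zero => simp
          | succ k ih => rw [succ_nsmul, ← heq (k • μ)] at *; exact ih ▸ rfl
        intro a
        have ha : a = (a * μ⁻¹).val • μ := by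
          rw [nsmul_eq_mul, ZMod.natCast_val, ZMod.cast_id, mul_assoc,
            inv_mul_cancel₀ hμ, mul_one]
        rw [ha, key]
      rw [Submodule.mem_span_singleton]
      refine ⟨f.eval 0, ?_⟩
      rw [show (1 : Polynomial (ZMod p) ⧸ Ideal.span {(X : Polynomial (ZMod p)) ^ p - X}) = Ideal.Quotient.mk (Ideal.span {(X : Polynomial (ZMod p)) ^ p - X}) 1 from rfl, hsmul,
        mul_one, Ideal.Quotient.eq, memI]
      intro a
      simp [hconst a]
    · rw [Submodule.span_le, Set.singleton_subset_iff]
      have h1 : (1 : Polynomial (ZMod p) ⧸ Ideal.span {(X : Polynomial (ZMod p)) ^ p - X}) = Ideal.Quotient.mk (Ideal.span {(X : Polynomial (ZMod p)) ^ p - X}) 1 := rfl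
      rw [SetLike.mem_coe, LinearMap.mem_ker, h1, hD]
      simp
  · rintro ⟨y, hy⟩
    obtain ⟨g, rfl⟩ := Ideal.Quotient.mk_surjective y
    rw [hD, Ideal.Quotient.eq, memI] at hy
    have hev : ∀ a : ZMod p,
        μ⁻¹ * (g.eval (a + μ) - g.eval a) - a ^ (p - 1) = 0 := by
      intro a
      have := hy a
      simpa using this
    have hsum0 : ∑ a : ZMod p, (μ⁻¹ * (g.eval (a + μ) - g.eval a) - a ^ (p - 1)) = 0 := by
      simp [hev]
    have htel : ∑ a : ZMod p, (g.eval (a + μ) - g.eval a) = 0 := by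
      rw [Finset.sum_sub_distrib]
      have : ∑ a : ZMod p, g.eval (a + μ) = ∑ a : ZMod p, g.eval a :=
        Fintype.sum_equiv (Equiv.addRight μ) _ _ (fun a => rfl)
      rw [this, sub_self]
    have hsump : ∑ a : ZMod p, (a : ZMod p) ^ (p - 1) = 0 := by
      have := hsum0
      rw [Finset.sum_sub_distrib, ← Finset.mul_sum, htel, mul_zero, zero_sub,
        neg_eq_zero] at this
      exact this
    have hsumval : ∑ a : ZMod p, (a : ZMod p) ^ (p - 1) = (p - 1 : ℕ) := by
      rw [← Finset.sum_erase_add _ _ (Finset.mem_univ (0 : ZMod p))]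
      have h0 : (0 : ZMod p) ^ (p - 1) = 0 := by
        apply zero_pow
        omega
      rw [h0, add_zero]
      rw [Finset.sum_congr rfl (fun a ha => ZMod.pow_card_sub_one_eq_one
        (Finset.ne_of_mem_erase ha))]
      simp [Finset.card_erase_of_mem, ZMod.card]
    rw [hsumval] at hsump
    have : ((p - 1 : ℕ) : ZMod p) ≠ 0 := by
      rw [Ne, ZMod.natCast_eq_zero_iff]
      intro hdvd
      have := Nat.le_of_dvd (by omega) hdvd
      omega
    exact this hsump
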